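/- Let σ > 0 and let Z be a real random variable whose law is the centered Gaussian measure on ℝ with variance σ². Then there exists a constant c > 0 such that for every h ∈ (0,1] and every t ≥ 1, E[h·B·e^{−2hB}·Φ̄(B/√t − h·√t)] ≥ c·h, where B = max(Z + h, 0)/σ². -/

import Mathlib

open Real Filter MeasureTheory

/-- Standard normal density. -/
noncomputable def stdPhi (u : ℝ) : ℝ := (Real.sqrt (2 * Real.pi))⁻¹ * Real.exp (-u ^ 2 / 2)

/-- Standard normal distribution function. -/
noncomputable def stdCdf (u : ℝ) : ℝ := ∫ s in Set.Iic u, stdPhi s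

/-- Standard normal survivor function. -/
noncomputable def stdSurv (u : ℝ) : ℝ := 1 - stdCdf u

lemma stdPhi_pos (u : ℝ) : 0 < stdPhi u := by
  have : (0:ℝ) < Real.sqrt (2 * Real.pi) := Real.sqrt_pos.2 (by positivity)
  exact mul_pos (inv_pos.2 this) (Real.exp_pos _)

lemma integrable_stdPhi : Integrable stdPhi := by
  have h : Integrable (fun x : ℝ => Real.exp (-(1/2 : ℝ) * x ^ 2)) :=
    integrable_exp_neg_mul_sq (by norm_num)
  have : stdPhi = fun u => (Real.sqrt (2 * Real.pi))⁻¹ * Real.exp (-(1/2 : ℝ) * u ^ 2) := by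
    funext u; simp only [stdPhi]; rw [show -u^2/2 = -(1/2:ℝ)*u^2 by ring]
  rw [this]
  exact h.const_mul _

lemma integral_stdPhi : ∫ u, stdPhi u = 1 := by
  have h : ∫ x : ℝ, Real.exp (-(1/2 : ℝ) * x ^ 2) = Real.sqrt (Real.pi / (1/2)) :=
    integral_gaussian (1/2)
  have he : stdPhi = fun u => (Real.sqrt (2 * Real.pi))⁻¹ * Real.exp (-(1/2 : ℝ) * u ^ 2) := by
    funext u; simp only [stdPhi]; rw [show -u^2/2 = -(1/2:ℝ)*u^2 by ring]
  rw [he, integral_const_mul, h]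
  rw [show Real.pi / (1/2) = 2 * Real.pi by ring]
  rw [inv_mul_cancel₀]
  positivity

lemma stdCdf_nonneg (u : ℝ) : 0 ≤ stdCdf u :=
  setIntegral_nonneg measurableSet_Iic (fun x _ => (stdPhi_pos x).le)

lemma stdCdf_le_one (u : ℝ) : stdCdf u ≤ 1 := by
  rw [← integral_stdPhi]
  exact setIntegral_le_integral integrable_stdPhi (Filter.Eventually.of_forall fun x => (stdPhi_pos x).le)

lemma stdSurv_eq (u : ℝ) : stdSurv u = ∫ s in Set.Ioi u, stdPhi s := by
  have := integral_add_compl (s := Set.Iic u) measurableSet_Iic integrable_stdPhi (f := stdPhi)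
  rw [Set.compl_Iic, integral_stdPhi] at this
  unfold stdSurv stdCdf
  linarith

lemma stdSurv_pos (u : ℝ) : 0 < stdSurv u := by
  rw [stdSurv_eq]
  rw [setIntegral_pos_iff_support_of_nonneg_ae
    (Filter.Eventually.of_forall fun x => (stdPhi_pos x).le) integrable_stdPhi.integrableOn]
  have hs : Function.support stdPhi = Set.univ := by
    ext x; simp [Function.support, (stdPhi_pos x).ne']
  rw [hs, Set.univ_inter]
  simp [Real.volume_Ioi]

lemma stdSurv_le_one (u : ℝ) : stdSurv u ≤ 1 := by
  unfold stdSurv; linarith [stdCdf_nonneg u]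

lemma stdCdf_mono : Monotone stdCdf := fun a b hab =>
  setIntegral_mono_set integrable_stdPhi.integrableOn
    (Filter.Eventually.of_forall fun x => (stdPhi_pos x).le)
    (HasSubset.Subset.eventuallyLE (Set.Iic_subset_Iic.2 hab))

lemma stdSurv_anti : Antitone stdSurv := fun a b hab => by
  unfold stdSurv; linarith [stdCdf_mono hab]

lemma measurable_stdSurv : Measurable stdSurv :=
  (measurable_const.sub stdCdf_mono.measurable : Measurable stdSurv)

noncomputable def fFun (x y : ℝ) : ℝ := stdSurv (x - y) - Real.exp (2 * x * y) * stdSurv (x + y)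

noncomputable def gFun (x y : ℝ) : ℝ := 1 - x * stdSurv (x + y) / stdPhi (x + y)

lemma xexp_le (x : ℝ) (hx : 0 ≤ x) : x * Real.exp (-(2 * x)) ≤ 1 / 2 := by
  have h1 := Real.add_one_le_exp (2 * x)
  have h2 : Real.exp (-(2 * x)) * Real.exp (2 * x) = 1 := by
    rw [← Real.exp_add]; simp
  nlinarith [Real.exp_pos (-(2 * x))]

/-- Gaussian-averaged lower bound E[hB e^{−2hB} Φ̄(B/√t − h√t)] ≥ c·h. -/
theorem gaussian_lower_bound_minus (σ : ℝ) (hσ : 0 < σ) :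
    ∃ c : ℝ, 0 < c ∧ ∀ h : ℝ, h ∈ Set.Ioc (0 : ℝ) 1 → ∀ t : ℝ, 1 ≤ t →
      c * h ≤
        ∫ z, (h * (max (z + h) 0 / σ ^ 2) * Real.exp (-(2 * h * (max (z + h) 0 / σ ^ 2))) *
            stdSurv (max (z + h) 0 / σ ^ 2 / Real.sqrt t - h * Real.sqrt t))
          ∂(ProbabilityTheory.gaussianReal 0 (Real.toNNReal (σ ^ 2))) := by
  have hσ2 : (0:ℝ) < σ ^ 2 := by positivity
  set μ := ProbabilityTheory.gaussianReal 0 (Real.toNNReal (σ ^ 2)) with hμdef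
  set M : ℝ := (2 * σ ^ 2 + 1) / σ ^ 2 with hM
  have hM1 : (1:ℝ) ≤ M := by rw [hM, le_div_iff₀ hσ2]; nlinarith
  set S : Set ℝ := Set.Ioo (σ ^ 2) (2 * σ ^ 2) with hS
  have hSmeas : MeasurableSet S := measurableSet_Ioo
  have hμS : 0 < (μ S).toReal := by
    have h0 : μ S ≠ 0 := by
      intro h0
      have hv : (Real.toNNReal (σ ^ 2)) ≠ 0 := by
        simp [Real.toNNReal_eq_zero, not_le, hσ2, hσ.ne']
      have hvol := ProbabilityTheory.gaussianReal_absolutelyContinuous' 0 hv h0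
      rw [hS, Real.volume_Ioo] at hvol
      rw [ENNReal.ofReal_eq_zero] at hvol
      nlinarith
    exact ENNReal.toReal_pos h0 (measure_lt_top μ S).ne
  set K : ℝ := Real.exp (-(2 * M)) * stdSurv M with hK
  have hKpos : 0 < K := mul_pos (Real.exp_pos _) (stdSurv_pos M)
  refine ⟨K * (μ S).toReal, mul_pos hKpos hμS, ?_⟩
  rintro h ⟨hh0, hh1⟩ t ht
  set g : ℝ → ℝ := fun z =>
    h * (max (z + h) 0 / σ ^ 2) * Real.exp (-(2 * h * (max (z + h) 0 / σ ^ 2))) *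
      stdSurv (max (z + h) 0 / σ ^ 2 / Real.sqrt t - h * Real.sqrt t) with hg
  show K * (μ S).toReal * h ≤ ∫ z, g z ∂μ
  have hBnn : ∀ z : ℝ, 0 ≤ max (z + h) 0 / σ ^ 2 :=
    fun z => div_nonneg (le_max_right _ _) hσ2.le
  have hgnn : ∀ z, 0 ≤ g z := by
    intro z
    rw [hg]
    exact mul_nonneg (mul_nonneg (mul_nonneg hh0.le (hBnn z)) (Real.exp_pos _).le)
      (stdSurv_pos _).le
  have hgm : Measurable g := by
    have hB : Measurable fun z : ℝ => max (z + h) 0 / σ ^ 2 :=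
      ((measurable_id.add_const h).max measurable_const).div_const _
    exact ((measurable_const.mul hB).mul ((hB.const_mul (2 * h)).neg.exp)).mul
      (measurable_stdSurv.comp ((hB.div_const _).sub measurable_const))
  have hgi : Integrable g μ := by
    refine Integrable.mono' (integrable_const (1/2 : ℝ)) hgm.aestronglyMeasurable
      (Filter.Eventually.of_forall fun z => ?_)
    rw [Real.norm_eq_abs, abs_of_nonneg (hgnn z), hg]
    set B := max (z + h) 0 / σ ^ 2 with hB
    have hx : 0 ≤ h * B := mul_nonneg hh0.le (hBnn z)
    have h1 : (h * B) * Real.exp (-(2 * (h * B))) ≤ 1 / 2 := xexp_le _ hx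
    have h2 : stdSurv (B / Real.sqrt t - h * Real.sqrt t) ≤ 1 := stdSurv_le_one _
    have h3 : 0 < Real.exp (-(2 * h * B)) := Real.exp_pos _
    have h4 : (0:ℝ) < stdSurv (B / Real.sqrt t - h * Real.sqrt t) := stdSurv_pos _
    calc h * B * Real.exp (-(2 * h * B)) * stdSurv (B / Real.sqrt t - h * Real.sqrt t)
        ≤ h * B * Real.exp (-(2 * h * B)) * 1 := by
          apply mul_le_mul_of_nonneg_left h2 (mul_nonneg hx h3.le)
      _ = (h * B) * Real.exp (-(2 * (h * B))) := by rw [mul_one, mul_assoc 2 h B]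
      _ ≤ 1 / 2 := h1
  have hle : ∀ z, S.indicator (fun _ => K * h) z ≤ g z := by
    intro z
    by_cases hz : z ∈ S
    · rw [Set.indicator_of_mem hz, hg]
      obtain ⟨hz1, hz2⟩ := hz
      have hmax : max (z + h) 0 = z + h := max_eq_left (by nlinarith)
      set B := max (z + h) 0 / σ ^ 2 with hB
      have hB1 : (1:ℝ) ≤ B := by rw [hB, hmax, le_div_iff₀ hσ2]; nlinarith
      have hBM : B ≤ M := by
        rw [hB, hmax, hM, div_le_div_iff₀ hσ2 hσ2]; nlinarith
      have hst : (1:ℝ) ≤ Real.sqrt t := by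
        rw [show (1:ℝ) = Real.sqrt 1 by simp]; exact Real.sqrt_le_sqrt ht
      have harg : B / Real.sqrt t - h * Real.sqrt t ≤ M := by
        have h1 : B / Real.sqrt t ≤ B := div_le_self (by linarith) hst
        have h2 : 0 ≤ h * Real.sqrt t := mul_nonneg hh0.le (by linarith)
        linarith
      have hsurv : stdSurv M ≤ stdSurv (B / Real.sqrt t - h * Real.sqrt t) :=
        stdSurv_anti harg
      have hexp : Real.exp (-(2 * M)) ≤ Real.exp (-(2 * h * B)) := by
        apply Real.exp_le_exp.2; nlinarith
      calc K * h = h * 1 * Real.exp (-(2 * M)) * stdSurv M := by rw [hK]; ring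
        _ ≤ h * B * Real.exp (-(2 * h * B)) *
              stdSurv (B / Real.sqrt t - h * Real.sqrt t) := by
            apply mul_le_mul
            · apply mul_le_mul
              · apply mul_le_mul_of_nonneg_left hB1 hh0.le
              · exact hexp
              · exact (Real.exp_pos _).le
              · exact mul_nonneg hh0.le (by linarith)
            · exact hsurv
            · exact (stdSurv_pos _).le
            · exact mul_nonneg (mul_nonneg hh0.le (by linarith)) (Real.exp_pos _).le
    · rw [Set.indicator_of_notMem hz]; exact hgnn z
  have h1 : ∫ z, S.indicator (fun _ => K * h) z ∂μ = (μ S).toReal * (K * h) := by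
    rw [integral_indicator_const _ hSmeas]; simp [smul_eq_mul, measureReal_def]
  have h2 := integral_mono_of_nonneg
    (Filter.Eventually.of_forall fun z =>
      Set.indicator_nonneg (fun _ _ => by positivity) z)
    hgi (Filter.Eventually.of_forall hle)
  rw [h1] at h2
  calc K * (μ S).toReal * h = (μ S).toReal * (K * h) := by ring
    _ ≤ _ := h2
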